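/- Let g: K∖O → A be Borel measurable with g(x) ∈ A(x) for every x ∈ K∖O, and define the Markov kernel κ_g from X to X by κ_g(x,·) := Q(·|x, g(x)) for x ∈ K∖O and κ_g(x,·) := δ_x (the Dirac measure at x) for x ∈ O ∪ (X∖K). Then for every x ∈ X the hitting probability of the κ_g-chain satisfies P_x^{κ_g}(τ < τ' and τ < ∞) ≤ v*(x), where v* := lim_{n→∞} v_n is the pointwise limit of the value-iteration functions. -/

import Mathlib

open scoped Classical

open MeasureTheory Set Filter Topology

/-- The dynamic programming operator:
`Tu(x) = 1_O(x) + 1_{K∖O}(x) ⬝ sup_{a ∈ A(x)} ∫ 1_K(y) u(y) Q(dy|x,a)`. -/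
noncomputable def dpOp {X A : Type*} [MeasurableSpace X] (O K : Set X)
    (Amap : X → Set A) (Q : X → A → Measure X) (u : X → ℝ) : X → ℝ := fun x =>
  O.indicator (1 : X → ℝ) x +
    (K \ O).indicator
      (fun x' => sSup ((fun a => ∫ y, K.indicator u y ∂(Q x' a)) '' Amap x')) x


/-- The value-iteration functions: `v₀ = 1_O` and `v_{n+1} = T v_n`. -/
noncomputable def viter {X A : Type*} [MeasurableSpace X] (O K : Set X)
    (Amap : X → Set A) (Q : X → A → Measure X) : ℕ → X → ℝ
  | 0 => O.indicator (1 : X → ℝ)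
  | n + 1 => dpOp O K Amap Q (viter O K Amap Q n)


/-- First hitting time of the set `S` by the sequence `ω`, valued in `ℕ∞` (`⊤` if never hit). -/
noncomputable def hitTime {X : Type*} (S : Set X) (ω : ℕ → X) : ℕ∞ :=
  sInf ((fun t : ℕ => (t : ℕ∞)) '' {t : ℕ | ω t ∈ S})

/-- `P x` is the law on `X^ℕ` of the canonical Markov chain started at `x` with one-step
transition kernel `κ` (the Ionescu–Tulcea measure). -/
def IsMarkovChainLaw {X : Type*} [MeasurableSpace X] (κ : X → Measure X)
    (P : X → Measure (ℕ → X)) : Prop :=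
  (∀ x, IsProbabilityMeasure (P x)) ∧
  (∀ x, P x {ω | ω 0 = x} = 1) ∧
  (∀ x (n : ℕ) (E : Set (ℕ → X)),
    MeasurableSet[MeasurableSpace.comap (fun (ω : ℕ → X) (i : Fin (n + 1)) => ω (i : ℕ))
      inferInstance] E →
    ∀ f : X → ENNReal, Measurable f →
      ∫⁻ ω in E, f (ω (n + 1)) ∂(P x) = ∫⁻ ω in E, ∫⁻ y, f y ∂(κ (ω n)) ∂(P x))

noncomputable def wfun {X : Type*} [MeasurableSpace X] (O K : Set X)
    (κ : X → Measure X) : ℕ → X → ENNReal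
  | 0 => O.indicator 1
  | n + 1 => fun x =>
      O.indicator 1 x + (K \ O).indicator (fun x' => ∫⁻ y, wfun O K κ n y ∂(κ x')) x


lemma hitEvent_eq {X : Type*} {O K : Set X} (hOK : O ⊆ K) :
    {ω : ℕ → X | hitTime O ω < hitTime Kᶜ ω ∧ hitTime O ω < ⊤} =
      ⋃ t : ℕ, {ω : ℕ → X | ω t ∈ O ∧ ∀ s < t, ω s ∈ K \ O} := by
  ext ω
  simp only [mem_setOf_eq, mem_iUnion]
  constructor
  · rintro ⟨h1, h2⟩
    have hne : {t : ℕ | ω t ∈ O}.Nonempty := by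
      by_contra h
      rw [Set.not_nonempty_iff_eq_empty] at h
      simp [hitTime, h] at h2
    set n₀ := sInf {t : ℕ | ω t ∈ O} with hn₀
    have hmem : ω n₀ ∈ O := Nat.sInf_mem hne
    have hle : hitTime O ω ≤ (n₀ : ℕ∞) := sInf_le ⟨n₀, hmem, rfl⟩
    have hge : (n₀ : ℕ∞) ≤ hitTime O ω := by
      refine le_sInf ?_
      rintro b ⟨u, hu, rfl⟩
      exact Nat.cast_le.mpr (Nat.sInf_le hu)
    refine ⟨n₀, hmem, fun s hs => ⟨?_, fun hsO => Nat.notMem_of_lt_sInf hs hsO⟩⟩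
    by_contra hsK
    have hA : hitTime Kᶜ ω ≤ (s : ℕ∞) := sInf_le ⟨s, hsK, rfl⟩
    have hB : (n₀ : ℕ∞) < (s : ℕ∞) := lt_of_le_of_lt hge (lt_of_lt_of_le h1 hA)
    have : n₀ < s := by exact_mod_cast hB
    omega
  · rintro ⟨t, htO, hts⟩
    have hle : hitTime O ω ≤ (t : ℕ∞) := sInf_le ⟨t, htO, rfl⟩
    have hlt : (t : ℕ∞) < hitTime Kᶜ ω := by
      have h1 : ((t + 1 : ℕ) : ℕ∞) ≤ hitTime Kᶜ ω := by
        refine le_sInf ?_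
        rintro b ⟨s, hs, rfl⟩
        have hst : t < s := by
          by_contra hc
          push_neg at hc
          rcases lt_or_eq_of_le hc with h | h
          · exact hs (hts s h).1
          · exact hs (hOK (h ▸ htO))
        exact Nat.cast_le.mpr (Nat.succ_le_of_lt hst)
      calc (t : ℕ∞) < ((t + 1 : ℕ) : ℕ∞) := by exact_mod_cast Nat.lt_succ_self t
        _ ≤ _ := h1
    exact ⟨lt_of_le_of_lt hle hlt, lt_of_le_of_lt hle (by exact_mod_cast WithTop.coe_lt_top t)⟩


lemma dpOp_meas_bdd {X A : Type*}
    [TopologicalSpace X] [MeasurableSpace X] [BorelSpace X] [TopologicalSpace A]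
    (O K : Set X) (hmO : MeasurableSet O) (hmK : MeasurableSet K)
    (Amap : X → Set A)
    (hAne : ∀ x ∈ K \ O, (Amap x).Nonempty)
    (hAcp : ∀ x ∈ K \ O, IsCompact (Amap x))
    (hAuh : ∀ x ∈ K \ O, ∀ U : Set A, IsOpen U → Amap x ⊆ U →
      ∃ V : Set X, IsOpen V ∧ x ∈ V ∧ ∀ z ∈ (K \ O) ∩ V, Amap z ⊆ U)
    (Q : X → A → Measure X)
    (hQprob : ∀ x ∈ K \ O, ∀ a ∈ Amap x, IsProbabilityMeasure (Q x a))
    (hQfeller : ∀ g : X → ℝ, Measurable g → (∃ C, ∀ y, |g y| ≤ C) →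
      ContinuousOn (fun p : X × A => ∫ y, g y ∂(Q p.1 p.2))
        {p : X × A | p.1 ∈ K \ O ∧ p.2 ∈ Amap p.1})
    (u : X → ℝ) (hu : Measurable u) (hub : ∀ y, u y ∈ Icc (0:ℝ) 1) :
    Measurable (dpOp O K Amap Q u) ∧ ∀ x, dpOp O K Amap Q u x ∈ Icc (0:ℝ) 1 := by
  have hmKO : MeasurableSet (K \ O) := hmK.diff hmO
  have hfm : Measurable (K.indicator u) := hu.indicator hmK
  have hfb : ∀ y, K.indicator u y ∈ Icc (0:ℝ) 1 := by
    intro y; by_cases hy : y ∈ K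
    · simpa [Set.indicator_apply, hy] using hub y
    · simp [Set.indicator_apply, hy]
  have hfabs : ∀ y, |K.indicator u y| ≤ 1 := fun y =>
    abs_le.mpr ⟨by linarith [(hfb y).1], (hfb y).2⟩
  have hFcont : ContinuousOn (fun p : X × A => ∫ y, K.indicator u y ∂(Q p.1 p.2))
      {p : X × A | p.1 ∈ K \ O ∧ p.2 ∈ Amap p.1} := hQfeller _ hfm ⟨1, hfabs⟩
  have hInt : ∀ x ∈ K \ O, ∀ a ∈ Amap x, Integrable (K.indicator u) (Q x a) := by
    intro x hx a ha
    haveI := hQprob x hx a ha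
    exact (integrable_const (1:ℝ)).mono' hfm.aestronglyMeasurable
      (ae_of_all _ fun y => by rw [Real.norm_eq_abs]; exact hfabs y)
  have hFIcc : ∀ x ∈ K \ O, ∀ a ∈ Amap x, (∫ y, K.indicator u y ∂(Q x a)) ∈ Icc (0:ℝ) 1 := by
    intro x hx a ha
    haveI := hQprob x hx a ha
    constructor
    · exact integral_nonneg fun y => (hfb y).1
    · calc (∫ y, K.indicator u y ∂(Q x a)) ≤ ∫ _, (1:ℝ) ∂(Q x a) :=
          integral_mono (hInt x hx a ha) (integrable_const 1) fun y => (hfb y).2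
        _ = 1 := by simp
  set m : X → ℝ := fun x => sSup ((fun a => ∫ y, K.indicator u y ∂(Q x a)) '' Amap x) with hm
  have hBdd : ∀ x ∈ K \ O, BddAbove ((fun a => ∫ y, K.indicator u y ∂(Q x a)) '' Amap x) :=
    fun x hx => ⟨1, by rintro b ⟨a, ha, rfl⟩; exact (hFIcc x hx a ha).2⟩
  have hmIcc : ∀ x ∈ K \ O, m x ∈ Icc (0:ℝ) 1 := by
    intro x hx
    obtain ⟨a, ha⟩ := hAne x hx
    exact ⟨le_trans (hFIcc x hx a ha).1 (le_csSup (hBdd x hx) ⟨a, ha, rfl⟩),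
      csSup_le ((hAne x hx).image _) (by rintro b ⟨a', ha', rfl⟩; exact (hFIcc x hx a' ha').2)⟩
  have hopen : ∀ c : ℝ, ∃ W : Set X, IsOpen W ∧ {x | x ∈ K \ O ∧ m x < c} = (K \ O) ∩ W := by
    intro c
    have hV : ∀ x₀, x₀ ∈ K \ O → m x₀ < c →
        ∃ V : Set X, IsOpen V ∧ x₀ ∈ V ∧ ∀ z ∈ (K \ O) ∩ V, m z < c := by
      intro x₀ hx₀ hmx₀
      obtain ⟨uS, huS, heq⟩ := (continuousOn_iff'.mp hFcont) (Iio c) isOpen_Iio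
      have hsub : ({x₀} : Set X) ×ˢ Amap x₀ ⊆ uS := by
        rintro ⟨z, a⟩ ⟨rfl, ha⟩
        have hp : (z, a) ∈ (fun p : X × A => ∫ y, K.indicator u y ∂(Q p.1 p.2)) ⁻¹' Iio c ∩
            {p : X × A | p.1 ∈ K \ O ∧ p.2 ∈ Amap p.1} :=
          ⟨lt_of_le_of_lt (le_csSup (hBdd z hx₀) ⟨a, ha, rfl⟩) hmx₀, hx₀, ha⟩
        rw [heq] at hp; exact hp.1
      obtain ⟨V₁, U, hV₁, hU, hxV₁, hAU, hprod⟩ :=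
        generalized_tube_lemma isCompact_singleton (hAcp x₀ hx₀) huS hsub
      obtain ⟨V₂, hV₂, hxV₂, hAV₂⟩ := hAuh x₀ hx₀ U hU hAU
      refine ⟨V₁ ∩ V₂, hV₁.inter hV₂, ⟨hxV₁ rfl, hxV₂⟩, ?_⟩
      rintro z ⟨hzKO, hzV₁, hzV₂⟩
      have hzlt : ∀ a ∈ Amap z, (∫ y, K.indicator u y ∂(Q z a)) < c := by
        intro a ha
        have hmem : (z, a) ∈ uS ∩ {p : X × A | p.1 ∈ K \ O ∧ p.2 ∈ Amap p.1} :=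
          ⟨hprod ⟨hzV₁, hAV₂ z ⟨hzKO, hzV₂⟩ ha⟩, hzKO, ha⟩
        rw [← heq] at hmem; exact hmem.1
      have hcont : ContinuousOn (fun a => ∫ y, K.indicator u y ∂(Q z a)) (Amap z) := by
        have hc2 : ContinuousOn ((fun p : X × A => ∫ y, K.indicator u y ∂(Q p.1 p.2)) ∘
            fun a => (z, a)) (Amap z) :=
          hFcont.comp (Continuous.continuousOn (by continuity)) (fun a ha => ⟨hzKO, ha⟩)
        exact hc2
      obtain ⟨astar, hastar, hmax⟩ := (hAcp z hzKO).exists_isMaxOn (hAne z hzKO) hcont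
      have hle : m z ≤ ∫ y, K.indicator u y ∂(Q z astar) :=
        csSup_le ((hAne z hzKO).image _) (by rintro b ⟨a, ha, rfl⟩; exact hmax ha)
      exact lt_of_le_of_lt hle (hzlt astar hastar)
    choose! V hVo hVx hVlt using hV
    refine ⟨⋃ x₀ ∈ {x | x ∈ K \ O ∧ m x < c}, V x₀,
      isOpen_biUnion fun x₀ hx₀ => hVo x₀ hx₀.1 hx₀.2, ?_⟩
    ext z
    constructor
    · rintro ⟨hz1, hz2⟩
      exact ⟨hz1, mem_biUnion ⟨hz1, hz2⟩ (hVx z hz1 hz2)⟩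
    · rintro ⟨hz1, hz2⟩
      obtain ⟨x₀, hx₀, hzV⟩ := mem_iUnion₂.mp hz2
      exact ⟨hz1, hVlt x₀ hx₀.1 hx₀.2 z ⟨hz1, hzV⟩⟩
  have hm' : Measurable fun x => if x ∈ K \ O then m x else 0 := by
    apply measurable_of_Iio
    intro c
    obtain ⟨W, hW, hWeq⟩ := hopen c
    by_cases hc : (0:ℝ) < c
    · have hpre : (fun x => if x ∈ K \ O then m x else 0) ⁻¹' Iio c = ((K \ O) ∩ W) ∪ (K \ O)ᶜ := by
        ext z
        have hzw := Set.ext_iff.mp hWeq z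
        simp only [mem_setOf_eq, mem_inter_iff] at hzw
        simp only [mem_preimage, mem_Iio, mem_union, mem_inter_iff, mem_compl_iff]
        by_cases hz : z ∈ K \ O
        · rw [if_pos hz]
          constructor
          · intro h; exact Or.inl ⟨hz, (hzw.mp ⟨hz, h⟩).2⟩
          · rintro (h | h)
            · exact (hzw.mpr ⟨hz, h.2⟩).2
            · exact absurd hz h
        · rw [if_neg hz]
          exact ⟨fun _ => Or.inr hz, fun _ => hc⟩
      rw [hpre]; exact (hmKO.inter hW.measurableSet).union hmKO.compl
    · have hpre : (fun x => if x ∈ K \ O then m x else 0) ⁻¹' Iio c = (K \ O) ∩ W := by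
        ext z
        have hzw := Set.ext_iff.mp hWeq z
        simp only [mem_setOf_eq, mem_inter_iff] at hzw
        simp only [mem_preimage, mem_Iio, mem_inter_iff]
        by_cases hz : z ∈ K \ O
        · rw [if_pos hz]
          exact ⟨fun h => hzw.mp ⟨hz, h⟩, fun h => (hzw.mpr h).2⟩
        · rw [if_neg hz]
          constructor
          · intro h; exact absurd h hc
          · intro h; exact absurd (hzw.mpr h).1 hz
      rw [hpre]; exact hmKO.inter hW.measurableSet
  have heqfun : dpOp O K Amap Q u =
      fun x => O.indicator (1 : X → ℝ) x +
        (K \ O).indicator (fun x' => if x' ∈ K \ O then m x' else 0) x := by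
    funext z
    unfold dpOp
    congr 1
    rw [Set.indicator_apply, Set.indicator_apply]
    by_cases hz : z ∈ K \ O
    · rw [if_pos hz, if_pos hz]
    · rw [if_neg hz, if_neg hz]
  constructor
  · rw [heqfun]
    exact (measurable_one.indicator hmO).add (hm'.indicator hmKO)
  · intro z
    unfold dpOp
    rw [Set.indicator_apply, Set.indicator_apply]
    by_cases hzO : z ∈ O
    · have hzKO : z ∉ K \ O := fun h => h.2 hzO
      rw [if_pos hzO, if_neg hzKO]
      norm_num
    · by_cases hzKO : z ∈ K \ O
      · rw [if_neg hzO, if_pos hzKO]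
        simpa using hmIcc z hzKO
      · rw [if_neg hzO, if_neg hzKO]
        norm_num


lemma chain_le {X : Type*}
    [TopologicalSpace X] [PolishSpace X] [MeasurableSpace X] [BorelSpace X]
    (O K : Set X) (hmO : MeasurableSet O) (hmK : MeasurableSet K)
    (κ : X → Measure X) (hκmeas : Measurable κ)
    (hκprob : ∀ z, IsProbabilityMeasure (κ z))
    (P : Measure (ℕ → X)) [IsProbabilityMeasure P] (x : X)
    (hP0 : P {ω | ω 0 = x} = 1)
    (hPmarkov : ∀ (n : ℕ) (E : Set (ℕ → X)),
      MeasurableSet[MeasurableSpace.comap (fun (ω : ℕ → X) (i : Fin (n + 1)) => ω (i : ℕ))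
        inferInstance] E →
      ∀ f : X → ENNReal, Measurable f →
        ∫⁻ ω in E, f (ω (n + 1)) ∂P = ∫⁻ ω in E, ∫⁻ y, f y ∂(κ (ω n)) ∂P) :
    ∀ N : ℕ, P (⋃ t ∈ Finset.range (N+1), {ω : ℕ → X | ω t ∈ O ∧ ∀ s < t, ω s ∈ K \ O})
      ≤ wfun O K κ N x := by
  have hmKO : MeasurableSet (K \ O) := hmK.diff hmO
  set E : ℕ → Set (ℕ → X) := fun t => {ω | ω t ∈ O ∧ ∀ s < t, ω s ∈ K \ O} with hE
  set C : ℕ → Set (ℕ → X) := fun m => {ω | ∀ s < m, ω s ∈ K \ O} with hC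
  -- kernel for measurability of lintegrals
  let κK : ProbabilityTheory.Kernel X X := ⟨κ, hκmeas⟩
  haveI : ProbabilityTheory.IsMarkovKernel κK := ⟨fun a => hκprob a⟩
  have hlint : ∀ f : X → ENNReal, Measurable f → Measurable fun z => ∫⁻ y, f y ∂(κ z) :=
    fun f hf => Measurable.lintegral_kernel_prod_right' (κ := κK) (hf.comp measurable_snd)
  have hw : ∀ n, Measurable (wfun O K κ n) := by
    intro n
    induction n with
    | zero => exact measurable_one.indicator hmO
    | succ n ih =>
      exact (measurable_one.indicator hmO).add ((hlint _ ih).indicator hmKO)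
  have hCmeas : ∀ m, MeasurableSet (C m) := by
    intro m
    have hCeq : C m = ⋂ (s : ℕ), ⋂ (_ : s < m), (fun ω : ℕ → X => ω s) ⁻¹' (K \ O) := by
      ext ω; simp [hC]
    rw [hCeq]
    exact MeasurableSet.iInter fun s => MeasurableSet.iInter fun _ =>
      (measurable_pi_apply s) hmKO
  have hCcomap : ∀ m, MeasurableSet[MeasurableSpace.comap
      (fun (ω : ℕ → X) (i : Fin (m + 1)) => ω (i : ℕ)) inferInstance] (C (m+1)) := by
    intro m
    refine ⟨⋂ (i : Fin (m+1)), (fun v : Fin (m+1) → X => v i) ⁻¹' (K \ O), ?_, ?_⟩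
    · exact MeasurableSet.iInter fun i => (measurable_pi_apply i) hmKO
    · ext ω
      simp only [mem_preimage, mem_iInter, hC, mem_setOf_eq]
      exact ⟨fun h s hs => h ⟨s, hs⟩, fun h i => h i i.2⟩
  have hCsucc : ∀ m, {ω : ℕ → X | ω m ∈ K \ O} ∩ C m = C (m+1) := by
    intro m
    ext ω
    simp only [mem_inter_iff, mem_setOf_eq, hC]
    constructor
    · rintro ⟨h1, h2⟩ s hs
      rcases Nat.lt_succ_iff_lt_or_eq.mp hs with h | h
      · exact h2 s h
      · exact h ▸ h1
    · intro h
      exact ⟨h m (Nat.lt_succ_self m), fun s hs => h s (Nat.lt_succ_of_lt hs)⟩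
  have hbase : ∀ m, ∫⁻ ω in C m, wfun O K κ 0 (ω m) ∂P = P (E m) := by
    intro m
    have h1 : ∀ ω : ℕ → X, wfun O K κ 0 (ω m) =
        ({ω' : ℕ → X | ω' m ∈ O}).indicator (1 : (ℕ → X) → ENNReal) ω := by
      intro ω
      show O.indicator 1 (ω m) = _
      rw [Set.indicator_apply, Set.indicator_apply]
      rfl
    have hms : MeasurableSet {ω' : ℕ → X | ω' m ∈ O} := (measurable_pi_apply m) hmO
    calc ∫⁻ ω in C m, wfun O K κ 0 (ω m) ∂P
        = ∫⁻ ω in C m, ({ω' : ℕ → X | ω' m ∈ O}).indicator 1 ω ∂P :=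
          lintegral_congr fun ω => h1 ω
      _ = P.restrict (C m) {ω' : ℕ → X | ω' m ∈ O} := lintegral_indicator_one hms
      _ = P ({ω' : ℕ → X | ω' m ∈ O} ∩ C m) := Measure.restrict_apply hms
      _ = P (E m) := rfl
  have key : ∀ j m, (∑ i ∈ Finset.range (j+1), P (E (m+i))) ≤
      ∫⁻ ω in C m, wfun O K κ j (ω m) ∂P := by
    intro j
    induction j with
    | zero =>
      intro m
      rw [Finset.sum_range_one, hbase m]
      simp
    | succ j ih =>
      intro m
      have hstep : ∫⁻ ω in C m, wfun O K κ (j+1) (ω m) ∂P =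
          P (E m) + ∫⁻ ω in C (m+1), wfun O K κ j (ω (m+1)) ∂P := by
        have hmind : Measurable fun ω : ℕ → X => O.indicator (1 : X → ENNReal) (ω m) := by
          exact (measurable_one.indicator hmO).comp (measurable_pi_apply m)
        have hsplit : ∫⁻ ω in C m, wfun O K κ (j+1) (ω m) ∂P =
            (∫⁻ ω in C m, O.indicator (1 : X → ENNReal) (ω m) ∂P) +
            ∫⁻ ω in C m, (K \ O).indicator (fun x' => ∫⁻ y, wfun O K κ j y ∂(κ x')) (ω m) ∂P :=
          lintegral_add_left hmind _
        have hfirst : (∫⁻ ω in C m, O.indicator (1 : X → ENNReal) (ω m) ∂P) = P (E m) := by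
          have := hbase m
          simpa [wfun] using this
        have hsecond : ∫⁻ ω in C m, (K \ O).indicator
            (fun x' => ∫⁻ y, wfun O K κ j y ∂(κ x')) (ω m) ∂P =
            ∫⁻ ω in C (m+1), ∫⁻ y, wfun O K κ j y ∂(κ (ω m)) ∂P := by
          have hTm : MeasurableSet {ω' : ℕ → X | ω' m ∈ K \ O} := (measurable_pi_apply m) hmKO
          have h2 : ∀ ω : ℕ → X, (K \ O).indicator
              (fun x' => ∫⁻ y, wfun O K κ j y ∂(κ x')) (ω m) =
              ({ω' : ℕ → X | ω' m ∈ K \ O}).indicator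
                (fun ω' => ∫⁻ y, wfun O K κ j y ∂(κ (ω' m))) ω := by
            intro ω
            rw [Set.indicator_apply, Set.indicator_apply]
            rfl
          calc ∫⁻ ω in C m, (K \ O).indicator (fun x' => ∫⁻ y, wfun O K κ j y ∂(κ x')) (ω m) ∂P
              = ∫⁻ ω in C m, ({ω' : ℕ → X | ω' m ∈ K \ O}).indicator
                  (fun ω' => ∫⁻ y, wfun O K κ j y ∂(κ (ω' m))) ω ∂P :=
                lintegral_congr fun ω => h2 ω
            _ = ∫⁻ ω in {ω' : ℕ → X | ω' m ∈ K \ O}, (∫⁻ y, wfun O K κ j y ∂(κ (ω m)))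
                  ∂(P.restrict (C m)) := lintegral_indicator hTm _
            _ = ∫⁻ ω in C (m+1), ∫⁻ y, wfun O K κ j y ∂(κ (ω m)) ∂P := by
                rw [Measure.restrict_restrict hTm, hCsucc m]
        rw [hsplit, hfirst, hsecond, ← hPmarkov m (C (m+1)) (hCcomap m) _ (hw j)]
      rw [hstep]
      have hsum : (∑ i ∈ Finset.range (j+2), P (E (m+i))) =
          P (E m) + ∑ i ∈ Finset.range (j+1), P (E ((m+1)+i)) := by
        rw [Finset.sum_range_succ']
        simp only [Nat.add_zero]
        rw [add_comm]
        congr 1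
        refine Finset.sum_congr rfl fun i _ => ?_
        rw [show m + (i+1) = (m+1)+i by omega]
      rw [hsum]
      exact add_le_add_right (ih (m+1)) _
  intro N
  calc P (⋃ t ∈ Finset.range (N+1), E t) ≤ ∑ t ∈ Finset.range (N+1), P (E t) :=
        measure_biUnion_finset_le _ _
    _ = ∑ i ∈ Finset.range (N+1), P (E (0+i)) := by simp
    _ ≤ ∫⁻ ω in C 0, wfun O K κ N (ω 0) ∂P := key N 0
    _ = wfun O K κ N x := by
        have hC0 : C 0 = univ := by ext ω; simp [hC]
        rw [hC0, Measure.restrict_univ]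
        have hae : ∀ᵐ ω ∂P, ω 0 = x := by
          rw [ae_iff]
          have hms : MeasurableSet {ω : ℕ → X | ω 0 = x} := by
            have hsp : {ω : ℕ → X | ω 0 = x} = (fun ω : ℕ → X => ω 0) ⁻¹' {x} := rfl
            rw [hsp]
            exact (measurable_pi_apply 0) (measurableSet_singleton x)
          have hcompl : {ω : ℕ → X | ¬ ω 0 = x} = {ω : ℕ → X | ω 0 = x}ᶜ := rfl
          rw [hcompl, prob_compl_eq_zero_iff hms]
          exact hP0
        calc ∫⁻ ω, wfun O K κ N (ω 0) ∂P = ∫⁻ _, wfun O K κ N x ∂P :=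
              lintegral_congr_ae (hae.mono fun ω h => by
                show wfun O K κ N (ω 0) = wfun O K κ N x
                rw [h])
          _ = wfun O K κ N x := by simp [measure_univ]

theorem stmt6 {X A : Type*}
    [TopologicalSpace X] [PolishSpace X] [MeasurableSpace X] [BorelSpace X]
    [TopologicalSpace A] [PolishSpace A] [MeasurableSpace A] [BorelSpace A]
    (O K : Set X) (hOne : O.Nonempty) (hKne : K.Nonempty)
    (hmO : MeasurableSet O) (hmK : MeasurableSet K) (hOK : O ⊂ K)
    (Amap : X → Set A)
    (hAne : ∀ x ∈ K \ O, (Amap x).Nonempty)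
    (hAcp : ∀ x ∈ K \ O, IsCompact (Amap x))
    -- upper hemicontinuity of `x ↦ A(x)` on `K ∖ O`
    (hAuh : ∀ x ∈ K \ O, ∀ U : Set A, IsOpen U → Amap x ⊆ U →
      ∃ V : Set X, IsOpen V ∧ x ∈ V ∧ ∀ z ∈ (K \ O) ∩ V, Amap z ⊆ U)
    -- weak measurability of `x ↦ A(x)` on `K ∖ O`
    (hAwm : ∀ G : Set A, IsOpen G → MeasurableSet {x | x ∈ K \ O ∧ (Amap x ∩ G).Nonempty})
    (Q : X → A → Measure X)
    (hQprob : ∀ x ∈ K \ O, ∀ a ∈ Amap x, IsProbabilityMeasure (Q x a))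
    (hQmeas : ∀ B : Set X, MeasurableSet B →
      Measurable fun p : {p : X × A // p.1 ∈ K \ O ∧ p.2 ∈ Amap p.1} => Q p.1.1 p.1.2 B)
    -- strong Feller property of `Q` on `𝕂`
    (hQfeller : ∀ g : X → ℝ, Measurable g → (∃ C, ∀ y, |g y| ≤ C) →
      ContinuousOn (fun p : X × A => ∫ y, g y ∂(Q p.1 p.2))
        {p : X × A | p.1 ∈ K \ O ∧ p.2 ∈ Amap p.1})
    -- a measurable selector `g` on `K ∖ O`
    (g : X → A) (hgmeas : Measurable ((K \ O).restrict g))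
    (hgsel : ∀ x ∈ K \ O, g x ∈ Amap x)
    -- `P x` is the law of the Markov chain driven by the kernel `κ_g`
    (P : X → Measure (ℕ → X))
    (hP : IsMarkovChainLaw
      (fun x => if x ∈ K \ O then Q x (g x) else Measure.dirac x) P)
    -- `vstar` is the pointwise limit of the value-iteration functions
    (vstar : X → ℝ)
    (hvstar : ∀ x, Filter.Tendsto (fun n => viter O K Amap Q n x) Filter.atTop (nhds (vstar x))) :
    ∀ x, P x {ω | hitTime O ω < hitTime Kᶜ ω ∧ hitTime O ω < ⊤} ≤
      ENNReal.ofReal (vstar x) := by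
  have hOsub : O ⊆ K := hOK.subset
  have hmKO : MeasurableSet (K \ O) := hmK.diff hmO
  set v : ℕ → X → ℝ := viter O K Amap Q with hvdef
  have hvmb : ∀ n, Measurable (v n) ∧ ∀ z, v n z ∈ Icc (0:ℝ) 1 := by
    intro n
    induction n with
    | zero =>
      constructor
      · exact measurable_one.indicator hmO
      · intro z
        show O.indicator (1 : X → ℝ) z ∈ Icc (0:ℝ) 1
        rw [Set.indicator_apply]
        by_cases hz : z ∈ O
        · rw [if_pos hz]; simp
        · rw [if_neg hz]; simp
    | succ n ih =>
      exact dpOp_meas_bdd O K hmO hmK Amap hAne hAcp hAuh Q hQprob hQfeller (v n) ih.1 ih.2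
  have hvKind : ∀ n, Measurable (K.indicator (v n)) := fun n => (hvmb n).1.indicator hmK
  have hvKicc : ∀ n y, K.indicator (v n) y ∈ Icc (0:ℝ) 1 := by
    intro n y
    rw [Set.indicator_apply]
    by_cases hy : y ∈ K
    · rw [if_pos hy]; exact (hvmb n).2 y
    · rw [if_neg hy]; simp
  have hInt : ∀ n, ∀ z ∈ K \ O, ∀ a ∈ Amap z, Integrable (K.indicator (v n)) (Q z a) := by
    intro n z hz a ha
    haveI := hQprob z hz a ha
    exact (integrable_const (1:ℝ)).mono' (hvKind n).aestronglyMeasurable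
      (ae_of_all _ fun y => by
        rw [Real.norm_eq_abs]
        exact abs_le.mpr ⟨by linarith [(hvKicc n y).1], (hvKicc n y).2⟩)
  have hFIcc : ∀ n, ∀ z ∈ K \ O, ∀ a ∈ Amap z,
      (∫ y, K.indicator (v n) y ∂(Q z a)) ∈ Icc (0:ℝ) 1 := by
    intro n z hz a ha
    haveI := hQprob z hz a ha
    constructor
    · exact integral_nonneg fun y => (hvKicc n y).1
    · calc (∫ y, K.indicator (v n) y ∂(Q z a)) ≤ ∫ _, (1:ℝ) ∂(Q z a) :=
          integral_mono (hInt n z hz a ha) (integrable_const 1) fun y => (hvKicc n y).2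
        _ = 1 := by simp
  have hBdd : ∀ n, ∀ z ∈ K \ O,
      BddAbove ((fun a => ∫ y, K.indicator (v n) y ∂(Q z a)) '' Amap z) :=
    fun n z hz => ⟨1, by rintro b ⟨a, ha, rfl⟩; exact (hFIcc n z hz a ha).2⟩
  have hvO : ∀ n z, z ∈ O → v n z = 1 := by
    intro n z hz
    have hzKO : z ∉ K \ O := fun h => h.2 hz
    cases n with
    | zero =>
      show O.indicator (1 : X → ℝ) z = 1
      rw [Set.indicator_apply, if_pos hz]; rfl
    | succ n =>
      show dpOp O K Amap Q (v n) z = 1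
      unfold dpOp
      rw [Set.indicator_apply, Set.indicator_apply, if_pos hz, if_neg hzKO, add_zero]; rfl
  have hvKO : ∀ n z, z ∈ K \ O →
      v (n+1) z = sSup ((fun a => ∫ y, K.indicator (v n) y ∂(Q z a)) '' Amap z) := by
    intro n z hz
    show dpOp O K Amap Q (v n) z = _
    unfold dpOp
    rw [Set.indicator_apply, Set.indicator_apply, if_neg hz.2, if_pos hz, zero_add]
  have hvout : ∀ n z, z ∉ O → z ∉ K \ O → v n z = 0 := by
    intro n z hzO hzKO
    cases n with
    | zero =>
      show O.indicator (1 : X → ℝ) z = 0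
      rw [Set.indicator_apply, if_neg hzO]
    | succ n =>
      show dpOp O K Amap Q (v n) z = 0
      unfold dpOp
      rw [Set.indicator_apply, Set.indicator_apply, if_neg hzO, if_neg hzKO, add_zero]
  have hmono : ∀ n z, v n z ≤ v (n+1) z := by
    intro n
    induction n with
    | zero =>
      intro z
      by_cases hz : z ∈ O
      · rw [hvO 0 z hz, hvO 1 z hz]
      · have h0 : v 0 z = 0 := by
          show O.indicator (1 : X → ℝ) z = 0
          rw [Set.indicator_apply, if_neg hz]
        rw [h0]
        exact ((hvmb 1).2 z).1
    | succ n ih =>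
      intro z
      by_cases hzO : z ∈ O
      · rw [hvO (n+1) z hzO, hvO (n+2) z hzO]
      · by_cases hz : z ∈ K \ O
        · rw [hvKO n z hz, hvKO (n+1) z hz]
          refine csSup_le ((hAne z hz).image _) ?_
          rintro b ⟨a, ha, rfl⟩
          refine le_trans ?_ (le_csSup (hBdd (n+1) z hz) ⟨a, ha, rfl⟩)
          refine integral_mono (hInt n z hz a ha) (hInt (n+1) z hz a ha) ?_
          intro y
          rw [Set.indicator_apply, Set.indicator_apply]
          by_cases hy : y ∈ K
          · rw [if_pos hy, if_pos hy]; exact ih y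
          · rw [if_neg hy, if_neg hy]
        · rw [hvout (n+1) z hzO hz, hvout (n+2) z hzO hz]
  have hvle : ∀ n z, v n z ≤ vstar z := by
    intro n z
    have hmon : Monotone fun k => v k z := monotone_nat_of_le_succ fun k => hmono k z
    exact hmon.ge_of_tendsto (hvstar z) n
  intro x
  set κ : X → Measure X := fun z => if z ∈ K \ O then Q z (g z) else Measure.dirac z with hκdef
  obtain ⟨hPprob, hP0, hPmarkov⟩ := hP
  haveI := hPprob x
  have hκprob : ∀ z, IsProbabilityMeasure (κ z) := by
    intro z
    show IsProbabilityMeasure (if z ∈ K \ O then Q z (g z) else Measure.dirac z)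
    by_cases hz : z ∈ K \ O
    · rw [if_pos hz]; exact hQprob z hz (g z) (hgsel z hz)
    · rw [if_neg hz]; infer_instance
  have hκmeas : Measurable κ := by
    apply Measure.measurable_of_measurable_coe
    intro B hB
    have h1 : (fun z => κ z B) = fun z => if z ∈ K \ O then Q z (g z) B else B.indicator 1 z := by
      funext z
      show (if z ∈ K \ O then Q z (g z) else Measure.dirac z) B = _
      by_cases hz : z ∈ K \ O
      · rw [if_pos hz, if_pos hz]
      · rw [if_neg hz, if_neg hz, Measure.dirac_apply' z hB]
    rw [h1]
    apply measurable_of_restrict_of_restrict_compl hmKO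
    · have h2 : (K \ O).domRestrict (fun z => if z ∈ K \ O then Q z (g z) B else B.indicator 1 z) =
          fun z : (K \ O : Set X) => Q z.1 (g z.1) B := by
        funext z
        show (if (z : X) ∈ K \ O then Q z.1 (g z.1) B else B.indicator 1 z.1) = _
        rw [if_pos z.2]
      rw [h2]
      have hφ : Measurable (fun z : (K \ O : Set X) =>
          (⟨(z.1, g z.1), ⟨z.2, hgsel z.1 z.2⟩⟩ : {p : X × A // p.1 ∈ K \ O ∧ p.2 ∈ Amap p.1})) :=
        Measurable.subtype_mk (measurable_subtype_coe.prodMk hgmeas)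
      exact (hQmeas B hB).comp hφ
    · have h2 : ((K \ O)ᶜ).domRestrict (fun z => if z ∈ K \ O then Q z (g z) B else B.indicator 1 z) =
          fun z : ((K \ O)ᶜ : Set X) => B.indicator 1 z.1 := by
        funext z
        show (if (z : X) ∈ K \ O then Q z.1 (g z.1) B else B.indicator 1 z.1) = _
        rw [if_neg z.2]
      rw [h2]
      exact (measurable_one.indicator hB).comp measurable_subtype_coe
  have hw0K : ∀ n y, y ∉ K → wfun O K κ n y = 0 := by
    intro n y hy
    have hyO : y ∉ O := fun h => hy (hOsub h)
    have hyKO : y ∉ K \ O := fun h => hy h.1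
    cases n with
    | zero =>
      show O.indicator 1 y = 0
      rw [Set.indicator_apply, if_neg hyO]
    | succ n =>
      show O.indicator 1 y +
        (K \ O).indicator (fun x' => ∫⁻ y', wfun O K κ n y' ∂(κ x')) y = 0
      rw [Set.indicator_apply, Set.indicator_apply, if_neg hyO, if_neg hyKO, add_zero]
  have hwv : ∀ n z, wfun O K κ n z ≤ ENNReal.ofReal (v n z) := by
    intro n
    induction n with
    | zero =>
      intro z
      show O.indicator 1 z ≤ ENNReal.ofReal (O.indicator (1 : X → ℝ) z)
      rw [Set.indicator_apply, Set.indicator_apply]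
      by_cases hz : z ∈ O
      · rw [if_pos hz, if_pos hz]; simp
      · rw [if_neg hz, if_neg hz]; simp
    | succ n ih =>
      intro z
      by_cases hzO : z ∈ O
      · have hzKO : z ∉ K \ O := fun h => h.2 hzO
        have hL : wfun O K κ (n+1) z = 1 := by
          show O.indicator 1 z +
            (K \ O).indicator (fun x' => ∫⁻ y', wfun O K κ n y' ∂(κ x')) z = 1
          rw [Set.indicator_apply, Set.indicator_apply, if_pos hzO, if_neg hzKO, add_zero]; rfl
        rw [hL, hvO (n+1) z hzO]
        simp
      · by_cases hz : z ∈ K \ O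
        · have hκz : κ z = Q z (g z) := by
            show (if z ∈ K \ O then Q z (g z) else Measure.dirac z) = _
            rw [if_pos hz]
          have hL : wfun O K κ (n+1) z = ∫⁻ y', wfun O K κ n y' ∂(Q z (g z)) := by
            show O.indicator 1 z +
              (K \ O).indicator (fun x' => ∫⁻ y', wfun O K κ n y' ∂(κ x')) z = _
            rw [Set.indicator_apply, Set.indicator_apply, if_neg hzO, if_pos hz, zero_add, hκz]
          rw [hL, hvKO n z hz]
          have hga := hgsel z hz
          calc ∫⁻ y', wfun O K κ n y' ∂(Q z (g z))
              ≤ ∫⁻ y', ENNReal.ofReal (K.indicator (v n) y') ∂(Q z (g z)) := by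
                refine lintegral_mono fun y' => ?_
                by_cases hy : y' ∈ K
                · have heq : K.indicator (v n) y' = v n y' := by
                    rw [Set.indicator_apply, if_pos hy]
                  rw [heq]; exact ih y'
                · rw [hw0K n y' hy]; exact zero_le
            _ = ENNReal.ofReal (∫ y', K.indicator (v n) y' ∂(Q z (g z))) :=
                (ofReal_integral_eq_lintegral_ofReal (hInt n z hz (g z) hga)
                  (ae_of_all _ fun y' => (hvKicc n y').1)).symm
            _ ≤ ENNReal.ofReal (sSup ((fun a => ∫ y', K.indicator (v n) y' ∂(Q z a)) '' Amap z)) :=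
                ENNReal.ofReal_le_ofReal (le_csSup (hBdd n z hz) ⟨g z, hga, rfl⟩)
        · have hL : wfun O K κ (n+1) z = 0 := by
            show O.indicator 1 z +
              (K \ O).indicator (fun x' => ∫⁻ y', wfun O K κ n y' ∂(κ x')) z = 0
            rw [Set.indicator_apply, Set.indicator_apply, if_neg hzO, if_neg hz, add_zero]
          rw [hL]; exact zero_le
  have hkey := chain_le O K hmO hmK κ hκmeas hκprob (P x) x (hP0 x) (hPmarkov x)
  rw [hitEvent_eq hOsub]
  have hUeq : (⋃ t, {ω : ℕ → X | ω t ∈ O ∧ ∀ s < t, ω s ∈ K \ O}) =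
      ⋃ N : ℕ, ⋃ t ∈ Finset.range (N+1), {ω : ℕ → X | ω t ∈ O ∧ ∀ s < t, ω s ∈ K \ O} := by
    ext ω
    simp only [mem_iUnion, Finset.mem_range]
    constructor
    · rintro ⟨t, ht⟩
      exact ⟨t, t, Nat.lt_succ_self t, ht⟩
    · rintro ⟨N, t, _, ht⟩
      exact ⟨t, ht⟩
  rw [hUeq]
  have hdir : Directed (· ⊆ ·) (fun N : ℕ =>
      ⋃ t ∈ Finset.range (N+1), {ω : ℕ → X | ω t ∈ O ∧ ∀ s < t, ω s ∈ K \ O}) := by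
    apply Monotone.directed_le
    intro N M hNM ω hω
    simp only [mem_iUnion, Finset.mem_range] at hω ⊢
    obtain ⟨t, ht, h⟩ := hω
    exact ⟨t, by omega, h⟩
  rw [hdir.measure_iUnion]
  refine iSup_le fun N => le_trans (hkey N) ?_
  exact le_trans (hwv N x) (ENNReal.ofReal_le_ofReal (hvle N x))
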